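/- Let $k > 0$, $\rho_0 > 0$, $d_0 \in \mathbb{R}$ with $d_0 > -\sqrt{2k\rho_0}$, and set $\Gamma(t) = 1 + d_0 t + \tfrac{k}{2}\rho_0 t^2$. Then the functions $\rho(t) = \rho_0/\Gamma(t)$ and $d(t) = (d_0 + k\rho_0 t)/\Gamma(t)$ are defined for all $t \geq 0$ and satisfy the coupled system $d'(t) + d(t)^2 = k\rho(t)$ and $\rho'(t) + \rho(t) d(t) = 0$ with initial values $d(0) = d_0$, $\rho(0) = \rho_0$. -/

import Mathlib

theorem explicit_solution_zero_background
    (k ρ0 d0 : ℝ) (hk : 0 < k) (hρ0 : 0 < ρ0)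
    (hd0 : d0 > -Real.sqrt (2 * k * ρ0))
    (Γ ρ d : ℝ → ℝ)
    (hΓ : ∀ t, Γ t = 1 + d0 * t + k / 2 * ρ0 * t ^ 2)
    (hρ : ∀ t, ρ t = ρ0 / Γ t)
    (hd : ∀ t, d t = (d0 + k * ρ0 * t) / Γ t) :
    (∀ t ≥ (0:ℝ), Γ t ≠ 0) ∧
    d 0 = d0 ∧ ρ 0 = ρ0 ∧
    (∀ t ≥ (0:ℝ), HasDerivAt d (k * ρ t - (d t) ^ 2) t) ∧
    (∀ t ≥ (0:ℝ), HasDerivAt ρ (-(ρ t * d t)) t) := by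
  have hΓpos : ∀ t ≥ (0:ℝ), 0 < Γ t := by
    intro t ht
    rw [hΓ]
    rcases le_or_gt 0 d0 with h | h
    · nlinarith [mul_pos hk hρ0, sq_nonneg t, mul_nonneg h ht]
    · have hs := Real.sq_sqrt (show (0:ℝ) ≤ 2 * k * ρ0 by positivity)
      have hn := Real.sqrt_nonneg (2 * k * ρ0)
      have hsq : d0 ^ 2 < 2 * k * ρ0 := by nlinarith
      nlinarith [sq_nonneg (k * ρ0 * t + d0), mul_pos hk hρ0]
  have hΓne : ∀ t ≥ (0:ℝ), Γ t ≠ 0 := fun t ht => ne_of_gt (hΓpos t ht)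
  have hΓfun : Γ = fun t => 1 + d0 * t + k / 2 * ρ0 * t ^ 2 := funext hΓ
  have hΓderiv : ∀ t : ℝ, HasDerivAt Γ (d0 + k * ρ0 * t) t := by
    intro t
    rw [hΓfun]
    have h1 : HasDerivAt (fun t : ℝ => 1 + d0 * t + k / 2 * ρ0 * t ^ 2)
        (0 + d0 * 1 + k / 2 * ρ0 * (2 * t ^ 1)) t := by
      exact ((hasDerivAt_const t (1:ℝ)).add ((hasDerivAt_id t).const_mul d0)).add
        (((hasDerivAt_pow 2 t)).const_mul (k / 2 * ρ0))
    convert h1 using 1; ring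
  refine ⟨hΓne, ?_, ?_, ?_, ?_⟩
  · rw [hd 0, hΓ 0]; simp
  · rw [hρ 0, hΓ 0]; simp
  · intro t ht
    have hne := hΓne t ht
    have hnum : HasDerivAt (fun t : ℝ => d0 + k * ρ0 * t) (k * ρ0) t := by
      have := (hasDerivAt_id t).const_mul (k * ρ0)
      exact ((hasDerivAt_const t d0).add this).congr_deriv (by simp)
    have h := hnum.div (hΓderiv t) hne
    have hfun : d = fun t => (d0 + k * ρ0 * t) / Γ t := funext hd
    rw [hfun]
    refine h.congr_deriv (Eq.symm ?_)
    simp only [hρ, hd]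
    field_simp
  · intro t ht
    have hne := hΓne t ht
    have h := (hasDerivAt_const t ρ0).div (hΓderiv t) hne
    have hfun : ρ = fun t => ρ0 / Γ t := funext hρ
    rw [hfun]
    refine h.congr_deriv (Eq.symm ?_)
    simp only [hρ, hd]
    field_simp
    ring_nf
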